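/- Let G = (V,E) be a finite simple undirected graph on n vertices that is (r,s)-robust, where 1 ≤ r ≤ ⌈n/2⌉ and 1 ≤ s ≤ n. Then the minimum degree δ_min(G) of G satisfies: δ_min(G) ≥ 2r-2 if s ≥ r, and δ_min(G) ≥ r+s-1 if s < r. -/

import Mathlib

open Finset

variable {V : Type*}

/-- `XSet G r S` is the set of vertices of `S` having at least `r` neighbors outside `S`. -/
def XSet [Fintype V] [DecidableEq V] (G : SimpleGraph V) [DecidableRel G.Adj]
    (r : ℕ) (S : Finset V) : Finset V :=
  S.filter fun i => r ≤ (G.neighborFinset i \ S).card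

/-- `G` is `(r,s)`-robust (for integers `r ≥ 1`, `s ≥ 0`) if for every pair of nonempty
disjoint subsets `S1, S2` of the vertex set, either all vertices of `S1` have at least `r`
neighbors outside `S1`, or all vertices of `S2` have at least `r` neighbors outside `S2`,
or `|X^r_{S1}| + |X^r_{S2}| ≥ s`. -/
def RSRobust [Fintype V] [DecidableEq V] (G : SimpleGraph V) [DecidableRel G.Adj]
    (r s : ℕ) : Prop :=
  1 ≤ r ∧ ∀ S1 S2 : Finset V, S1.Nonempty → S2.Nonempty → Disjoint S1 S2 →
    (XSet G r S1).card = S1.card ∨ (XSet G r S2).card = S2.card ∨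
      s ≤ (XSet G r S1).card + (XSet G r S2).card

/-- Minimum-degree bound for `(r,s)`-robust graphs: if `G` on `n` vertices is
`(r,s)`-robust with `1 ≤ r ≤ ⌈n/2⌉` and `1 ≤ s ≤ n`, then the minimum degree of `G` is
at least `2r - 2` when `s ≥ r`, and at least `r + s - 1` when `s < r`. -/
theorem stmt10 [Fintype V] [DecidableEq V] (G : SimpleGraph V) [DecidableRel G.Adj]
    (n r s : ℕ) (hn : Fintype.card V = n) (hr1 : 1 ≤ r) (hrn : r ≤ (n + 1) / 2)
    (hs1 : 1 ≤ s) (hsn : s ≤ n) (hrob : RSRobust G r s) :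
    (r ≤ s → 2 * r - 2 ≤ G.minDegree) ∧ (s < r → r + s - 1 ≤ G.minDegree) := by
  haveI hV : Nonempty V := by
    rw [← Fintype.card_pos_iff, hn]; omega
  obtain ⟨i, hi⟩ := G.exists_minimal_degree_vertex
  set δ := G.degree i with hδdef
  have h2r : 2 * r ≤ n + 1 := by omega
  have key : r - 1 + min (r - 1) s ≤ δ := by
    rcases Nat.lt_or_ge r 2 with h2 | h2
    · have hr : r = 1 := by omega
      simp [hr]
    · by_contra hcon
      push_neg at hcon
      set t := min (r - 1) s with ht
      have htr : t ≤ r - 1 := min_le_left _ _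
      have hts : t ≤ s := min_le_right _ _
      have ht1 : 1 ≤ t := le_min (by omega) hs1
      have hδle : δ + 1 ≤ r - 1 + t := hcon
      have hcardN : (G.neighborFinset i).card = δ := G.card_neighborFinset_eq_degree i
      obtain ⟨B, hBsub, hBcard⟩ :=
        Finset.exists_subset_card_eq (s := G.neighborFinset i) (n := δ - (r - 1)) (by omega)
      have hiB : i ∉ B := fun h => (G.notMem_neighborFinset_self i) (hBsub h)
      set S1 : Finset V := insert i B with hS1
      set S2 : Finset V := S1ᶜ with hS2
      have hS1card : S1.card = B.card + 1 := Finset.card_insert_of_notMem hiB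
      have hS2card : S2.card = n - S1.card := by
        rw [hS2, Finset.card_compl, hn]
      have hS2ne : S2.Nonempty := by
        rw [← Finset.card_pos, hS2card]; omega
      have hiX : i ∉ XSet G r S1 := by
        simp only [XSet, Finset.mem_filter, not_and]
        intro _
        have hsub : G.neighborFinset i \ S1 ⊆ G.neighborFinset i \ B :=
          Finset.sdiff_subset_sdiff (le_refl _) (Finset.subset_insert _ _)
        have hc : (G.neighborFinset i \ B).card = δ - B.card := by
          rw [Finset.card_sdiff_of_subset hBsub, hcardN]
        have hle := Finset.card_le_card hsub
        omega
      have hX1sub : XSet G r S1 ⊆ B := by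
        intro x hx
        have hxS1 : x ∈ S1 := Finset.filter_subset _ _ hx
        have hxi : x ≠ i := fun h => hiX (h ▸ hx)
        rcases Finset.mem_insert.mp hxS1 with h | h
        · exact absurd h hxi
        · exact h
      have hX1card := Finset.card_le_card hX1sub
      have hX1lt : (XSet G r S1).card ≠ S1.card := by omega
      have hX2 : XSet G r S2 = ∅ := by
        rw [Finset.eq_empty_iff_forall_notMem]
        intro u hu
        simp only [XSet, Finset.mem_filter] at hu
        obtain ⟨huS2, hur⟩ := hu
        have hsub : G.neighborFinset u \ S2 ⊆ S1 := by
          intro x hx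
          have hx2 := (Finset.mem_sdiff.mp hx).2
          rwa [hS2, Finset.notMem_compl] at hx2
        have hle := Finset.card_le_card hsub
        omega
      have hdisj : Disjoint S1 S2 := disjoint_compl_right
      rcases hrob.2 S1 S2 ⟨i, Finset.mem_insert_self i B⟩ hS2ne hdisj with h | h | h
      · exact hX1lt h
      · rw [hX2, Finset.card_empty] at h
        have := hS2ne.card_pos
        omega
      · rw [hX2, Finset.card_empty] at h
        omega
  constructor
  · intro hrs
    have hm : min (r - 1) s = r - 1 := by omega
    omega
  · intro hsr
    have hm : min (r - 1) s = s := by omega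
    omega
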